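/- For all integers m ≥ 0, r ≥ 1, and n ≥ 1, Σ_{j=1}^n j · S_m^{(r-1)}(j) = (n+1) · S_m^{(r)}(n) − S_m^{(r+1)}(n). -/
import Mathlib


/-- Hyper-sum of powers of integers: `S m 0 n = n^m` and
`S m (r+1) n = ∑ i in [1..n], S m r i`. -/
def S (m : ℕ) : ℕ → ℕ → ℚ
  | 0, n => (n : ℚ) ^ m
  | r + 1, n => ∑ i ∈ Finset.Icc 1 n, S m r i

lemma S_succ_top (m r n : ℕ) : S m (r + 1) (n + 1) = S m (r + 1) n + S m r (n + 1) := by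
  show (∑ i ∈ Finset.Icc 1 (n + 1), S m r i) = _
  rw [Finset.sum_Icc_succ_top (by omega)]
  rfl

theorem stmt_4 (m r n : ℕ) (hr : 1 ≤ r) (hn : 1 ≤ n) :
    ∑ j ∈ Finset.Icc 1 n, (j : ℚ) * S m (r - 1) j
      = ((n : ℚ) + 1) * S m r n - S m (r + 1) n := by
  obtain ⟨s, rfl⟩ : ∃ s, r = s + 1 := ⟨r - 1, by omega⟩
  simp only [Nat.add_sub_cancel]
  induction n with
  | zero => omega
  | succ n ih =>
    rcases Nat.eq_zero_or_pos n with h0 | h0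
    · subst h0
      simp [S_succ_top, show S m (s+1) 1 = S m s 1 from by
        show (∑ i ∈ Finset.Icc 1 1, S m s i) = _; simp,
        show S m (s+2) 0 = 0 from by show (∑ i ∈ Finset.Icc 1 0, _) = 0; simp,
        show S m (s+1) 0 = 0 from by show (∑ i ∈ Finset.Icc 1 0, _) = 0; simp]
      ring
    · rw [Finset.sum_Icc_succ_top (by omega), ih h0, S_succ_top, S_succ_top,
        S_succ_top]
      push_cast
      ring
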